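/- Let θ̄_0 ∈ [0,π] and θ̄_i = g(θ̄_{i−1}) with g(θ) = arccos(((π−θ)cosθ+sinθ)/π). Then the product ∏_{i=0}^{d−1} (π − θ̄_i)/π is at least ((π − θ̄_0)/π) · d^{−3}. -/

import Mathlib

open Real

noncomputable def g (θ : ℝ) : ℝ :=
  Real.arccos (((Real.pi - θ) * Real.cos θ + Real.sin θ) / Real.pi)

-- Taylor-type bounds
lemma sin_taylor {x : ℝ} (hx : 0 ≤ x) : x - x^3/6 ≤ Real.sin x := by
  have key : Monotone (fun x : ℝ => Real.sin x - x + x^3/6) := by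
    apply monotone_of_deriv_nonneg
    · fun_prop
    · intro y
      have h : HasDerivAt (fun x : ℝ => Real.sin x - x + x^3/6)
          (Real.cos y - 1 + (3 * y^(3-1))/6) y :=
        ((Real.hasDerivAt_sin y).sub (hasDerivAt_id y)).add ((hasDerivAt_pow 3 y).div_const 6)
      rw [h.deriv]
      have := Real.one_sub_sq_div_two_le_cos (x := y)
      norm_num
      nlinarith
  have h2 := key hx
  simp only [Real.sin_zero] at h2
  norm_num at h2
  linarith

lemma cos_taylor {x : ℝ} (hx : 0 ≤ x) : Real.cos x ≤ 1 - x^2/2 + x^4/24 := by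
  have key : MonotoneOn (fun x : ℝ => 1 - x^2/2 + x^4/24 - Real.cos x) (Set.Ici 0) := by
    apply monotoneOn_of_deriv_nonneg (convex_Ici 0)
    · fun_prop
    · fun_prop
    · intro y hy
      rw [interior_Ici] at hy
      have h : HasDerivAt (fun x : ℝ => 1 - x^2/2 + x^4/24 - Real.cos x)
          (((0:ℝ) - (2*y^(2-1))/2 + (4*y^(4-1))/24) - (-Real.sin y)) y := by
        exact (((hasDerivAt_const y (1:ℝ)).sub ((hasDerivAt_pow 2 y).div_const 2)).add
          ((hasDerivAt_pow 4 y).div_const 24)).sub (Real.hasDerivAt_cos y)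
      rw [h.deriv]
      have := sin_taylor (le_of_lt hy)
      norm_num
      nlinarith
  have h2 := key (Set.self_mem_Ici) (Set.mem_Ici.2 hx) hx
  simp only [Real.cos_zero] at h2
  norm_num at h2
  linarith

lemma H_antitone : AntitoneOn (fun θ : ℝ => (π - θ) * Real.cos θ + Real.sin θ)
    (Set.Icc 0 π) := by
  apply antitoneOn_of_deriv_nonpos (convex_Icc 0 π)
  · fun_prop
  · fun_prop
  · intro y hy
    rw [interior_Icc] at hy
    have h : HasDerivAt (fun θ : ℝ => (π - θ) * Real.cos θ + Real.sin θ)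
        (((0 - 1) * Real.cos y + (π - y) * (-Real.sin y)) + Real.cos y) y :=
      (((hasDerivAt_const y π).sub (hasDerivAt_id y)).mul (Real.hasDerivAt_cos y)).add
        (Real.hasDerivAt_sin y)
    rw [h.deriv]
    have hs : 0 ≤ Real.sin y := Real.sin_nonneg_of_nonneg_of_le_pi hy.1.le hy.2.le
    nlinarith [hy.2]

lemma stepgen {s : ℝ} (hs : 0 < s) (hs2 : s ≤ π/2) :
    Real.cos (3*π*s/(3*π+s)) ≤ ((π - s) * Real.cos s + Real.sin s)/π := by
  have hpi := Real.pi_gt_d6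
  have hpi' := Real.pi_lt_d2
  set s' := 3*π*s/(3*π+s) with hs'def
  have hden : 0 < 3*π+s := by linarith
  have hs'pos : 0 < s' := by positivity
  have hs'lt : s' < s := by
    rw [hs'def, div_lt_iff₀ hden]; nlinarith
  have hdiff : s - s' = s^2/(3*π+s) := by
    rw [hs'def]; field_simp; ring
  have hmid : Real.sin ((s' + s)/2) ≤ Real.sin s := by
    apply Real.strictMonoOn_sin.monotoneOn
    · constructor <;> [linarith; linarith]
    · constructor <;> [linarith; linarith]
    · linarith
  have hhalf : Real.sin ((s - s')/2) ≤ (s - s')/2 := Real.sin_le (by linarith)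
  have hhalfnn : 0 ≤ Real.sin ((s - s')/2) :=
    Real.sin_nonneg_of_nonneg_of_le_pi (by linarith) (by linarith)
  have hsinnn : 0 ≤ Real.sin s :=
    Real.sin_nonneg_of_nonneg_of_le_pi hs.le (by linarith)
  have hcc : Real.cos s' - Real.cos s ≤ Real.sin s * (s - s') := by
    have hid := Real.cos_sub_cos s' s
    have hneg : Real.sin ((s' - s)/2) = -Real.sin ((s - s')/2) := by
      rw [← Real.sin_neg]; ring_nf
    have h1 : Real.sin ((s' + s)/2) * Real.sin ((s - s')/2) ≤ Real.sin s * ((s - s')/2) :=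
      mul_le_mul hmid hhalf hhalfnn hsinnn
    rw [hid, hneg]; nlinarith
  have hsin := sin_taylor hs.le
  have hcos := cos_taylor hs.le
  have key : s * Real.cos s * (3*π+s) ≤ Real.sin s * (3*π + s - π*s^2) := by
    have hcoef : 0 < 3*π + s - π*s^2 := by nlinarith
    have h1 := mul_le_mul_of_nonneg_right hsin hcoef.le
    have h2 := mul_le_mul_of_nonneg_right hcos (by positivity : (0:ℝ) ≤ s*(3*π+s))
    have h3 : s^2 ≤ (π/2)^2 := by nlinarith
    have h4 := mul_le_mul_of_nonneg_right h3 (pow_pos hs 4).le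
    have hpisq : π^2 < 9.93 := by nlinarith
    have h5 : 0 < π * s^5 := by positivity
    nlinarith [h1, h2, h4, h5, pow_pos hs 4]
  have hfrac : Real.sin s * (s - s') * π ≤ Real.sin s - s * Real.cos s := by
    have heq : Real.sin s * (s^2/(3*π+s)) * π = (Real.sin s * s^2 * π)/(3*π+s) := by ring
    rw [hdiff, heq, div_le_iff₀ hden]; linarith [key]
  rw [le_div_iff₀ Real.pi_pos]
  have hccpi := mul_le_mul_of_nonneg_right hcc Real.pi_pos.le
  linarith [hccpi, hfrac]

lemma stepk (k : ℕ) : Real.cos (3*π/((k:ℝ)+4)) ≤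
    ((π - 3*π/((k:ℝ)+3)) * Real.cos (3*π/((k:ℝ)+3)) + Real.sin (3*π/((k:ℝ)+3)))/π := by
  have hpi := Real.pi_gt_d6
  have hpi' := Real.pi_lt_d2
  match k with
  | 0 =>
    norm_num
    have h1 : 3*π/3 = π := by ring
    have h2 : Real.cos (3*π/4) ≤ 0 :=
      Real.cos_nonpos_of_pi_div_two_le_of_le (by linarith) (by linarith)
    exact h2
  | 1 =>
    norm_num
    have h34 : (3:ℝ)*π/4 = π - π/4 := by ring
    have hc : Real.cos (3*π/4) = -(Real.sqrt 2/2) := by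
      rw [h34, Real.cos_pi_sub, Real.cos_pi_div_four]
    have hs : Real.sin (3*π/4) = Real.sqrt 2/2 := by
      rw [h34, Real.sin_pi_sub, Real.sin_pi_div_four]
    have h2 : Real.cos (3*π/5) ≤ 0 :=
      Real.cos_nonpos_of_pi_div_two_le_of_le (by linarith) (by linarith)
    have hsqrt : 0 ≤ Real.sqrt 2 := Real.sqrt_nonneg 2
    have h3 : 0 ≤ ((π - 3*π/4) * Real.cos (3*π/4) + Real.sin (3*π/4))/π := by
      rw [hc, hs]
      apply div_nonneg _ Real.pi_pos.le
      nlinarith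
    linarith
  | 2 =>
    norm_num
    have h36 : (3:ℝ)*π/6 = π/2 := by ring
    have h35 : (3:ℝ)*π/5 = π - 2*π/5 := by ring
    have hcos25 : Real.cos (2*π/5) ≤ 1/2 := by
      have := Real.cos_le_cos_of_nonneg_of_le_pi (x := π/3) (y := 2*π/5)
        (by positivity) (by linarith) (by linarith)
      rwa [Real.cos_pi_div_three] at this
    have hcos25nn : 0 ≤ Real.cos (2*π/5) :=
      Real.cos_nonneg_of_mem_Icc ⟨by linarith, by linarith⟩
    have hsin25 : Real.sqrt 3/2 ≤ Real.sin (2*π/5) := by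
      have := Real.sin_le_sin_of_le_of_le_pi_div_two (x := π/3) (y := 2*π/5)
        (by linarith) (by linarith) (by linarith)
      rwa [Real.sin_pi_div_three] at this
    have hs3 : (1.7:ℝ) ≤ Real.sqrt 3 := by
      nlinarith [Real.sq_sqrt (show (0:ℝ) ≤ 3 by norm_num), Real.sqrt_nonneg 3]
    rw [h36, h35, Real.cos_pi_sub, Real.sin_pi_sub, Real.cos_pi_div_two]
    apply div_nonneg _ Real.pi_pos.le
    have hmul : (π - (π - 2*π/5)) * Real.cos (2*π/5) ≤ (2*π/5) * (1/2) := by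
      have : π - (π - 2*π/5) = 2*π/5 := by ring
      rw [this]
      exact mul_le_mul_of_nonneg_left hcos25 (by positivity)
    nlinarith
  | (n+3) =>
    have hc : (0:ℝ) < (n:ℝ)+6 := by positivity
    set s : ℝ := 3*π/((n:ℝ)+6) with hsdef
    have hs : 0 < s := by positivity
    have hs2 : s ≤ π/2 := by
      rw [hsdef, div_le_div_iff₀ hc (by norm_num : (0:ℝ) < 2)]
      nlinarith
    have heq : 3*π*s/(3*π+s) = 3*π/((n:ℝ)+7) := by
      rw [hsdef]
      rw [div_eq_div_iff]
      · field_simp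
        ring
      · have h : 0 < 3*π + 3*π/((n:ℝ)+6) := by positivity
        exact h.ne'
      · positivity
    have := stepgen hs hs2
    rw [heq] at this
    have hcast3 : ((n+3:ℕ):ℝ) + 3 = (n:ℝ)+6 := by push_cast; ring
    have hcast4 : ((n+3:ℕ):ℝ) + 4 = (n:ℝ)+7 := by push_cast; ring
    rw [hcast3, hcast4]
    exact this

lemma g_le (k : ℕ) {θ : ℝ} (h0 : 0 ≤ θ) (h1 : θ ≤ 3*π/((k:ℝ)+3)) :
    g θ ≤ 3*π/((k:ℝ)+4) := by
  have hk3 : (0:ℝ) < (k:ℝ)+3 := by positivity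
  have hk4 : (0:ℝ) < (k:ℝ)+4 := by positivity
  have hsle : 3*π/((k:ℝ)+3) ≤ π := by
    rw [div_le_iff₀ hk3]; nlinarith [Real.pi_pos, Nat.cast_nonneg (α := ℝ) k]
  have hs'le : 3*π/((k:ℝ)+4) ≤ π := by
    rw [div_le_iff₀ hk4]; nlinarith [Real.pi_pos, Nat.cast_nonneg (α := ℝ) k]
  have hθπ : θ ≤ π := h1.trans hsle
  have hspos : 0 < 3*π/((k:ℝ)+3) := by positivity
  have hs'pos : 0 < 3*π/((k:ℝ)+4) := by positivity
  have hH := H_antitone (Set.mem_Icc.2 ⟨h0, hθπ⟩) (Set.mem_Icc.2 ⟨hspos.le, hsle⟩) h1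
  simp only at hH
  have hH0 := H_antitone (Set.mem_Icc.2 ⟨le_refl 0, Real.pi_pos.le⟩)
    (Set.mem_Icc.2 ⟨h0, hθπ⟩) h0
  simp only [Real.cos_zero, Real.sin_zero, mul_one, sub_zero, add_zero] at hH0
  set v : ℝ := ((π - θ) * Real.cos θ + Real.sin θ) / π with hv
  have hlow : Real.cos (3*π/((k:ℝ)+4)) ≤ v := by
    refine (stepk k).trans ?_
    exact div_le_div_of_nonneg_right hH Real.pi_pos.le |>.trans_eq rfl
  have hup : v ≤ 1 := by
    rw [hv, div_le_one Real.pi_pos]; linarith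
  have harc : Real.arccos v ≤ Real.arccos (Real.cos (3*π/((k:ℝ)+4))) := by
    apply Real.strictAntiOn_arccos.antitoneOn
    · exact Set.mem_Icc.2 ⟨Real.neg_one_le_cos _, Real.cos_le_one _⟩
    · exact Set.mem_Icc.2 ⟨(Real.neg_one_le_cos _).trans hlow, hup⟩
    · exact hlow
  rw [Real.arccos_cos hs'pos.le hs'le] at harc
  exact harc


theorem stmt7 (t : ℕ → ℝ) (h0 : t 0 ∈ Set.Icc 0 Real.pi)
    (hrec : ∀ i, t (i + 1) = g (t i)) (d : ℕ) (hd : 1 ≤ d) :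
    (Real.pi - t 0) / Real.pi * ((d : ℝ) ^ 3)⁻¹ ≤
      ∏ i ∈ Finset.range d, (Real.pi - t i) / Real.pi := by
  have hpi := Real.pi_pos
  have tb : ∀ i : ℕ, 0 ≤ t i ∧ t i ≤ 3*π/((i:ℝ)+3) := by
    intro i
    induction i with
    | zero =>
      refine ⟨h0.1, ?_⟩
      norm_num
      linarith [h0.2]
    | succ n ih =>
      constructor
      · rw [hrec n]; exact Real.arccos_nonneg _
      · have hg := g_le n ih.1 ih.2
        rw [hrec n]
        have hc : ((n+1:ℕ):ℝ) + 3 = (n:ℝ) + 4 := by push_cast; ring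
        rw [hc]
        exact hg
  have tpi : ∀ i : ℕ, t i ≤ π := by
    intro i
    refine (tb i).2.trans ?_
    have hk3 : (0:ℝ) < (i:ℝ)+3 := by positivity
    rw [div_le_iff₀ hk3]
    nlinarith [Nat.cast_nonneg (α := ℝ) i]
  have hfac_nn : ∀ i : ℕ, 0 ≤ (π - t i)/π := fun i =>
    div_nonneg (by linarith [tpi i]) hpi.le
  have hfac : ∀ i : ℕ, 1 ≤ i → (i:ℝ)/((i:ℝ)+3) ≤ (π - t i)/π := by
    intro i hi
    have hk3 : (0:ℝ) < (i:ℝ)+3 := by positivity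
    rw [div_le_div_iff₀ hk3 hpi]
    have h2 := (tb i).2
    rw [le_div_iff₀ hk3] at h2
    nlinarith
  have prodlb : ∀ m : ℕ, 1 ≤ m →
      (π - t 0)/π * (6/((m:ℝ)*((m:ℝ)+1)*((m:ℝ)+2))) ≤
        ∏ i ∈ Finset.range m, (π - t i)/π := by
    intro m hm
    induction m with
    | zero => exact absurd hm (by norm_num)
    | succ n ih =>
      rcases Nat.eq_zero_or_pos n with hn | hn
      · subst hn
        rw [Finset.prod_range_one]
        norm_num
      · have ihn := ih hn
        rw [Finset.prod_range_succ]
        have hf := hfac n hn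
        have hprod_nn : 0 ≤ ∏ i ∈ Finset.range n, (π - t i)/π :=
          Finset.prod_nonneg fun i _ => hfac_nn i
        have hnpos : (0:ℝ) < (n:ℝ) := by exact_mod_cast hn
        have hn' : (n:ℝ) ≠ 0 := hnpos.ne'
        have hqq : 6/(((n:ℝ)+1)*((n:ℝ)+2)*((n:ℝ)+3)) =
            (6/((n:ℝ)*((n:ℝ)+1)*((n:ℝ)+2))) * ((n:ℝ)/((n:ℝ)+3)) := by
          field_simp
        have hcalc : (π - t 0)/π * (6/(((n:ℝ)+1)*((n:ℝ)+2)*((n:ℝ)+3))) =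
            ((π - t 0)/π * (6/((n:ℝ)*((n:ℝ)+1)*((n:ℝ)+2)))) * ((n:ℝ)/((n:ℝ)+3)) := by
          rw [hqq]; ring
        push_cast
        rw [show ((n:ℝ)+1)*((n:ℝ)+1+1)*((n:ℝ)+1+2) = ((n:ℝ)+1)*((n:ℝ)+2)*((n:ℝ)+3) by ring,
          hcalc]
        exact mul_le_mul ihn hf (by positivity) hprod_nn
  refine le_trans ?_ (prodlb d hd)
  apply mul_le_mul_of_nonneg_left _ (hfac_nn 0)
  have hd1 : (1:ℝ) ≤ (d:ℝ) := by exact_mod_cast hd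
  rw [inv_eq_one_div, div_le_div_iff₀ (by positivity) (by positivity)]
  have hsub : (0:ℝ) ≤ (d:ℝ) - 1 := by linarith
  nlinarith [mul_nonneg (mul_nonneg hsub (by positivity : (0:ℝ) ≤ (d:ℝ)))
    (by positivity : (0:ℝ) ≤ 5*(d:ℝ)+2)]
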